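/- Let α₂ = (√2 - 1)/(√2 + 1) and define x₀'(t) = -2√α₂ cos t / ((1-α₂)cos t + (1+α₂)). Then for any t₁ < t₂, ∫_{t₁}^{t₂} x₀'(t) dt with t₂ = t₁ + 2π equals 2(√2 - 1)π. -/

import Mathlib

open Real

theorem x0_period_increment (t₁ t₂ : ℝ) (h : t₂ = t₁ + 2 * Real.pi) :
    ∫ t in t₁..t₂,
        (-2 * Real.sqrt ((Real.sqrt 2 - 1) / (Real.sqrt 2 + 1)) * Real.cos t /
          ((1 - (Real.sqrt 2 - 1) / (Real.sqrt 2 + 1)) * Real.cos t +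
            (1 + (Real.sqrt 2 - 1) / (Real.sqrt 2 + 1)))) =
      2 * (Real.sqrt 2 - 1) * Real.pi := by
  set s := Real.sqrt 2 with hsdef
  have hs2 : s ^ 2 = 2 := Real.sq_sqrt (by norm_num)
  have hs0 : 0 ≤ s := Real.sqrt_nonneg 2
  have hs1 : 1 < s := by nlinarith
  have hα : (s - 1) / (s + 1) = (s - 1) ^ 2 := by
    rw [div_eq_iff (by nlinarith)]; nlinarith
  have hsq : Real.sqrt ((s - 1) / (s + 1)) = s - 1 := by
    rw [hα, Real.sqrt_sq (by linarith)]
  have hint : ∀ t : ℝ,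
      (-2 * Real.sqrt ((s - 1) / (s + 1)) * Real.cos t /
        ((1 - (s - 1) / (s + 1)) * Real.cos t + (1 + (s - 1) / (s + 1)))) =
      -Real.cos t / (Real.cos t + s) := by
    intro t
    have hc1 : -1 ≤ Real.cos t := Real.neg_one_le_cos t
    have hd1 : (0 : ℝ) < Real.cos t + s := by nlinarith
    rw [hsq, hα]
    have hd2 : (0 : ℝ) < (1 - (s - 1) ^ 2) * Real.cos t + (1 + (s - 1) ^ 2) := by nlinarith
    rw [div_eq_div_iff hd2.ne' hd1.ne']
    linear_combination (-(Real.cos t ^ 2 + Real.cos t)) * hs2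
  simp only [hint]
  have key : ∀ t : ℝ, HasDerivAt
      (fun u => (s - 1) * u - 2 * s * Real.arctan (Real.sin u / (Real.cos u + (s + 1))))
      (-Real.cos t / (Real.cos t + s)) t := by
    intro t
    have hc1 : -1 ≤ Real.cos t := Real.neg_one_le_cos t
    have hc : (0 : ℝ) < Real.cos t + (s + 1) := by nlinarith
    have hds : (0 : ℝ) < Real.cos t + s := by nlinarith
    have h1 : HasDerivAt (fun u => Real.sin u / (Real.cos u + (s + 1)))
        ((1 + (s + 1) * Real.cos t) / (Real.cos t + (s + 1)) ^ 2) t := by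
      have h0 := (Real.hasDerivAt_sin t).div ((Real.hasDerivAt_cos t).add_const (s + 1)) hc.ne'
      refine h0.congr_deriv (Eq.symm ?_)
      have hpyth := Real.sin_sq_add_cos_sq t
      field_simp
      ring_nf
      nlinarith [Real.sin_sq_add_cos_sq t]
    have h2 := (Real.hasDerivAt_arctan (Real.sin t / (Real.cos t + (s + 1)))).comp t h1
    have h3 := ((hasDerivAt_id t).const_mul (s - 1)).sub (h2.const_mul (2 * s))
    refine h3.congr_deriv (Eq.symm ?_)
    have hden : 1 + (Real.sin t / (Real.cos t + (s + 1))) ^ 2 =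
        (2 * (s + 1) * (Real.cos t + s)) / (Real.cos t + (s + 1)) ^ 2 := by
      field_simp
      nlinarith [Real.sin_sq_add_cos_sq t]
    have hterm : 1 / (1 + (Real.sin t / (Real.cos t + (s + 1))) ^ 2) *
        ((1 + (s + 1) * Real.cos t) / (Real.cos t + (s + 1)) ^ 2) =
        (1 + (s + 1) * Real.cos t) / (2 * (s + 1) * (Real.cos t + s)) := by
      rw [hden]
      field_simp
    rw [hterm]
    rw [div_eq_iff hds.ne']
    field_simp
    linear_combination (-s) * hs2
  have hcont : Continuous fun t : ℝ => -Real.cos t / (Real.cos t + s) := by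
    apply Continuous.div (by continuity) (by continuity)
    intro t
    have hc1 : -1 ≤ Real.cos t := Real.neg_one_le_cos t
    nlinarith
  rw [intervalIntegral.integral_eq_sub_of_hasDerivAt (fun t _ => key t)
    (hcont.intervalIntegrable t₁ t₂)]
  subst h
  simp [Real.sin_add_two_pi, Real.cos_add_two_pi]
  ring
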